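/- Output-feedback stability matrix completion (equations (15)–(16), proof of Corollaries 4–5): Suppose S is a stability matrix for the output-feedback realization R with controller K. Then the remaining blocks of S are determined by (Φxx, Φux, Φxy, Φuy): Syx = C*Φxx + D*Φux, Syy = C*Φxy + D*Φuy + 1, Sxu = Φxx*B + Φxy*D, Suu = 1 + Φux*B + Φuy*D, and Syu = Syx*B + Syy*D. Moreover Φux = K * Syx and Φuy = K * Syy. -/

import Mathlib

open Matrix

noncomputable section

set_option synthInstance.maxHeartbeats 1000000
set_option maxHeartbeats 1000000

/-- A 3×3 block matrix. -/
def b3 {α n₁ n₂ n₃ m₁ m₂ m₃ : Type*}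
    (M₁₁ : Matrix n₁ m₁ α) (M₁₂ : Matrix n₁ m₂ α) (M₁₃ : Matrix n₁ m₃ α)
    (M₂₁ : Matrix n₂ m₁ α) (M₂₂ : Matrix n₂ m₂ α) (M₂₃ : Matrix n₂ m₃ α)
    (M₃₁ : Matrix n₃ m₁ α) (M₃₂ : Matrix n₃ m₂ α) (M₃₃ : Matrix n₃ m₃ α) :
    Matrix (n₁ ⊕ n₂ ⊕ n₃) (m₁ ⊕ m₂ ⊕ m₃) α :=
  Matrix.fromBlocks M₁₁ (Matrix.fromCols M₁₂ M₁₃)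
    (Matrix.fromRows M₂₁ M₃₁) (Matrix.fromBlocks M₂₂ M₂₃ M₃₂ M₃₃)

/-- A real constant matrix regarded as a matrix of rational transfer functions. -/
def mR {n m : Type*} (M : Matrix n m ℝ) : Matrix n m (RatFunc ℝ) :=
  M.map (algebraMap ℝ (RatFunc ℝ))

/-- The transfer-function variable `z`. -/
def zz : RatFunc ℝ := RatFunc.X

section Helpers

variable {α n₁ n₂ n₃ m₁ m₂ m₃ l₁ l₂ l₃ : Type*}

lemma myFromColumns_add [Add α] (A₁ B₁ : Matrix n₁ m₁ α) (A₂ B₂ : Matrix n₁ m₂ α) :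
    fromCols A₁ A₂ + fromCols B₁ B₂ = fromCols (A₁ + B₁) (A₂ + B₂) := by
  ext _ (j | j) <;> simp [fromCols]

lemma myFromRows_add [Add α] (A₁ B₁ : Matrix n₁ m₁ α) (A₂ B₂ : Matrix n₂ m₁ α) :
    fromRows A₁ A₂ + fromRows B₁ B₂ = fromRows (A₁ + B₁) (A₂ + B₂) := by
  ext (i | i) _ <;> simp [fromRows_apply_inl, fromRows_apply_inr]

lemma b3_eq_iff {M₁₁ N₁₁ : Matrix n₁ m₁ α} {M₁₂ N₁₂ : Matrix n₁ m₂ α} {M₁₃ N₁₃ : Matrix n₁ m₃ α}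
    {M₂₁ N₂₁ : Matrix n₂ m₁ α} {M₂₂ N₂₂ : Matrix n₂ m₂ α} {M₂₃ N₂₃ : Matrix n₂ m₃ α}
    {M₃₁ N₃₁ : Matrix n₃ m₁ α} {M₃₂ N₃₂ : Matrix n₃ m₂ α} {M₃₃ N₃₃ : Matrix n₃ m₃ α} :
    b3 M₁₁ M₁₂ M₁₃ M₂₁ M₂₂ M₂₃ M₃₁ M₃₂ M₃₃ = b3 N₁₁ N₁₂ N₁₃ N₂₁ N₂₂ N₂₃ N₃₁ N₃₂ N₃₃ ↔
      M₁₁ = N₁₁ ∧ M₁₂ = N₁₂ ∧ M₁₃ = N₁₃ ∧ M₂₁ = N₂₁ ∧ M₂₂ = N₂₂ ∧ M₂₃ = N₂₃ ∧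
      M₃₁ = N₃₁ ∧ M₃₂ = N₃₂ ∧ M₃₃ = N₃₃ := by
  unfold b3
  rw [fromBlocks_inj, fromCols_ext_iff, fromRows_ext_iff, fromBlocks_inj]
  tauto

lemma b3_one [DecidableEq n₁] [DecidableEq n₂] [DecidableEq n₃] [Semiring α] :
    b3 (1 : Matrix n₁ n₁ α) 0 0 0 (1 : Matrix n₂ n₂ α) 0 0 0 (1 : Matrix n₃ n₃ α) = 1 := by
  unfold b3
  rw [fromCols_zero, fromRows_zero, fromBlocks_one, fromBlocks_one]

lemma one_sub_b3 [DecidableEq n₁] [DecidableEq n₂] [DecidableEq n₃] [Ring α]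
    (M₁₁ : Matrix n₁ n₁ α) (M₁₂ : Matrix n₁ n₂ α) (M₁₃ : Matrix n₁ n₃ α)
    (M₂₁ : Matrix n₂ n₁ α) (M₂₂ : Matrix n₂ n₂ α) (M₂₃ : Matrix n₂ n₃ α)
    (M₃₁ : Matrix n₃ n₁ α) (M₃₂ : Matrix n₃ n₂ α) (M₃₃ : Matrix n₃ n₃ α) :
    1 - b3 M₁₁ M₁₂ M₁₃ M₂₁ M₂₂ M₂₃ M₃₁ M₃₂ M₃₃ =
      b3 (1 - M₁₁) (-M₁₂) (-M₁₃) (-M₂₁) (1 - M₂₂) (-M₂₃) (-M₃₁) (-M₃₂) (1 - M₃₃) := by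
  ext (i | i | i) (j | j | j) <;>
    simp [b3, fromBlocks, fromCols, fromRows_apply_inl, fromRows_apply_inr, one_apply, Matrix.sub_apply]

lemma b3_mul_b3 [Fintype n₁] [Fintype n₂] [Fintype n₃] [Semiring α]
    (A₁₁ : Matrix m₁ n₁ α) (A₁₂ : Matrix m₁ n₂ α) (A₁₃ : Matrix m₁ n₃ α)
    (A₂₁ : Matrix m₂ n₁ α) (A₂₂ : Matrix m₂ n₂ α) (A₂₃ : Matrix m₂ n₃ α)
    (A₃₁ : Matrix m₃ n₁ α) (A₃₂ : Matrix m₃ n₂ α) (A₃₃ : Matrix m₃ n₃ α)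
    (B₁₁ : Matrix n₁ l₁ α) (B₁₂ : Matrix n₁ l₂ α) (B₁₃ : Matrix n₁ l₃ α)
    (B₂₁ : Matrix n₂ l₁ α) (B₂₂ : Matrix n₂ l₂ α) (B₂₃ : Matrix n₂ l₃ α)
    (B₃₁ : Matrix n₃ l₁ α) (B₃₂ : Matrix n₃ l₂ α) (B₃₃ : Matrix n₃ l₃ α) :
    b3 A₁₁ A₁₂ A₁₃ A₂₁ A₂₂ A₂₃ A₃₁ A₃₂ A₃₃ * b3 B₁₁ B₁₂ B₁₃ B₂₁ B₂₂ B₂₃ B₃₁ B₃₂ B₃₃ =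
      b3 (A₁₁ * B₁₁ + (A₁₂ * B₂₁ + A₁₃ * B₃₁))
         (A₁₁ * B₁₂ + (A₁₂ * B₂₂ + A₁₃ * B₃₂))
         (A₁₁ * B₁₃ + (A₁₂ * B₂₃ + A₁₃ * B₃₃))
         (A₂₁ * B₁₁ + (A₂₂ * B₂₁ + A₂₃ * B₃₁))
         (A₂₁ * B₁₂ + (A₂₂ * B₂₂ + A₂₃ * B₃₂))
         (A₂₁ * B₁₃ + (A₂₂ * B₂₃ + A₂₃ * B₃₃))
         (A₃₁ * B₁₁ + (A₃₂ * B₂₁ + A₃₃ * B₃₁))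
         (A₃₁ * B₁₂ + (A₃₂ * B₂₂ + A₃₃ * B₃₂))
         (A₃₁ * B₁₃ + (A₃₂ * B₂₃ + A₃₃ * B₃₃)) := by
  unfold b3
  rw [fromBlocks_multiply, fromCols_mul_fromRows, mul_fromCols,
    fromCols_mul_fromBlocks, myFromColumns_add, fromRows_mul, fromBlocks_mul_fromRows,
    myFromRows_add, fromRows_mul_fromCols, fromBlocks_multiply, fromBlocks_add]

end Helpers

theorem of_stability_completion {n m p : Type*} [Fintype n] [Fintype m] [Fintype p]
    [DecidableEq n] [DecidableEq m] [DecidableEq p]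
    (A : Matrix n n ℝ) (B : Matrix n m ℝ) (C : Matrix p n ℝ) (D : Matrix p m ℝ)
    (K : Matrix m p (RatFunc ℝ))
    (Φxx : Matrix n n (RatFunc ℝ)) (Sxu : Matrix n m (RatFunc ℝ)) (Φxy : Matrix n p (RatFunc ℝ))
    (Φux : Matrix m n (RatFunc ℝ)) (Suu : Matrix m m (RatFunc ℝ)) (Φuy : Matrix m p (RatFunc ℝ))
    (Syx : Matrix p n (RatFunc ℝ)) (Syu : Matrix p m (RatFunc ℝ)) (Syy : Matrix p p (RatFunc ℝ))
    (hL : (1 - b3 (mR A + (1 - zz) • (1 : Matrix n n (RatFunc ℝ))) (mR B)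
            (0 : Matrix n p (RatFunc ℝ))
            (0 : Matrix m n (RatFunc ℝ)) (0 : Matrix m m (RatFunc ℝ)) K
            (mR C) (mR D) (0 : Matrix p p (RatFunc ℝ))) *
          b3 Φxx Sxu Φxy Φux Suu Φuy Syx Syu Syy = 1)
    (hR : b3 Φxx Sxu Φxy Φux Suu Φuy Syx Syu Syy *
          (1 - b3 (mR A + (1 - zz) • (1 : Matrix n n (RatFunc ℝ))) (mR B)
            (0 : Matrix n p (RatFunc ℝ))
            (0 : Matrix m n (RatFunc ℝ)) (0 : Matrix m m (RatFunc ℝ)) K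
            (mR C) (mR D) (0 : Matrix p p (RatFunc ℝ))) = 1) :
    Syx = mR C * Φxx + mR D * Φux ∧
    Syy = mR C * Φxy + mR D * Φuy + 1 ∧
    Sxu = Φxx * mR B + Φxy * mR D ∧
    Suu = 1 + Φux * mR B + Φuy * mR D ∧
    Syu = Syx * mR B + Syy * mR D ∧
    Φux = K * Syx ∧ Φuy = K * Syy := by
  rw [one_sub_b3, b3_mul_b3, ← b3_one, b3_eq_iff] at hL
  rw [one_sub_b3, b3_mul_b3, ← b3_one, b3_eq_iff] at hR
  obtain ⟨-, -, -, hux, -, huy, hyx, hyu, hyy⟩ := hL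
  obtain ⟨-, hxu, -, -, huu, -, -, -, -⟩ := hR
  simp only [Matrix.zero_mul, Matrix.mul_zero, Matrix.neg_mul, Matrix.mul_neg, neg_zero,
    zero_add, add_zero, sub_zero, Matrix.one_mul, Matrix.mul_one] at hux huy hyx hyu hyy hxu huu
  have h6 : Φux = K * Syx := by rwa [add_neg_eq_zero] at hux
  have h7 : Φuy = K * Syy := by rwa [add_neg_eq_zero] at huy
  have h1 : Syx = mR C * Φxx + mR D * Φux := by
    linear_combination (norm := abel1) hyx
  have h2 : Syy = mR C * Φxy + mR D * Φuy + 1 := by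
    linear_combination (norm := abel1) hyy
  have h3 : Sxu = Φxx * mR B + Φxy * mR D := by
    linear_combination (norm := abel1) hxu
  have h4 : Suu = 1 + Φux * mR B + Φuy * mR D := by
    linear_combination (norm := abel1) huu
  have h5 : Syu = Syx * mR B + Syy * mR D := by
    have h5' : Syu = mR C * Sxu + mR D * Suu := by
      linear_combination (norm := abel1) hyu
    rw [h5', h3, h4, h1, h2]
    simp only [Matrix.mul_add, Matrix.add_mul, Matrix.mul_one, Matrix.one_mul, Matrix.mul_assoc]
    abel
  exact ⟨h1, h2, h3, h4, h5, h6, h7⟩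

end
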